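/- Let n ≥ 1 be an integer and Q ∈ ℂ[x,z] with deg_z Q(0,z) ≥ 2. Then there exist a polynomial p ∈ ℂ[z] with deg p ≥ 2 and polynomials q_i(x,t) ∈ ℂ[x,t] for 2 ≤ i ≤ deg p, each with deg_x q_i < n − 1, such that the Danielewski hypersurface X_{Q,n} is equivalent to the Danielewski hypersurface defined by the equation x^n y − p(z) − x·Σ_{i=2}^{deg p} p^{(i)}(z)·q_i(x, p(z)) = 0, where p^{(i)} denotes the i-th derivative of p. -/

import Mathlib

open MvPolynomial

noncomputable section

/-- The polynomial ring `ℂ[x,y,z]`, with `X 0 = x`, `X 1 = y`, `X 2 = z`. -/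
abbrev R3 := MvPolynomial (Fin 3) ℂ

/-- The polynomial ring `ℂ[x,z]`, with `X 0 = x`, `X 1 = z`. -/
abbrev R2 := MvPolynomial (Fin 2) ℂ

/-- The embedding `ℂ[x,z] → ℂ[x,y,z]`, `x ↦ x`, `z ↦ z`. -/
def toXYZ : R2 →ₐ[ℂ] R3 := aeval ![X 0, X 2]

/-- The defining polynomial `x^n y - Q(x,z)` of the Danielewski hypersurface `X_{Q,n}`. -/
def danPoly (Q : R2) (n : ℕ) : R3 := X 0 ^ n * X 1 - toXYZ Q

/-- The coordinate ring `S_{Q,n} = ℂ[x,y,z]/(x^n y - Q(x,z))`. -/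
abbrev danRing (Q : R2) (n : ℕ) := R3 ⧸ Ideal.span {danPoly Q n}

/-- The quotient projection `ℂ[x,y,z] → S_{Q,n}`. -/
def danProj (Q : R2) (n : ℕ) : R3 →ₐ[ℂ] danRing Q n := Ideal.Quotient.mkₐ ℂ _

/-- `Q(0,z)` as a univariate polynomial in `z`. -/
def Q0 (Q : R2) : Polynomial ℂ := aeval ![0, Polynomial.X] Q

/-- A derivation is locally nilpotent if every element is killed by some iterate. -/
def IsLND {A : Type*} [CommRing A] [Algebra ℂ A] (δ : Derivation ℂ A A) : Prop :=
  ∀ a : A, ∃ m : ℕ, 1 ≤ m ∧ (⇑δ)^[m] a = 0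

/-- Two Danielewski hypersurfaces are equivalent if some algebra automorphism of
`ℂ[x,y,z]` maps the ideal `(x^{n₁} y - Q₁)` onto the ideal `(x^{n₂} y - Q₂)`. -/
def DanEquiv (Q₁ : R2) (n₁ : ℕ) (Q₂ : R2) (n₂ : ℕ) : Prop :=
  ∃ Φ : R3 ≃ₐ[ℂ] R3,
    Ideal.map Φ.toAlgHom.toRingHom (Ideal.span {danPoly Q₁ n₁}) = Ideal.span {danPoly Q₂ n₂}

/-- `X_{Q,n}` is in standard form if `Q = p(z) + x q(x,z)` with `deg_z q < deg p`. -/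
def IsStandardForm (Q : R2) : Prop :=
  ∃ (p : Polynomial ℂ) (q : R2),
    Q = Polynomial.aeval (X 1) p + X 0 * q ∧ (q = 0 ∨ degreeOf 1 q < p.natDegree)

/-- `X_{Q,n}` is in reduced standard form if moreover `deg_x Q < n` and
`deg_z q < deg p - 1`. -/
def IsReducedStandardForm (Q : R2) (n : ℕ) : Prop :=
  degreeOf 0 Q < n ∧
  ∃ (p : Polynomial ℂ) (q : R2),
    Q = Polynomial.aeval (X 1) p + X 0 * q ∧ (q = 0 ∨ degreeOf 1 q < p.natDegree - 1)


section Work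

lemma fin2_cases (j : Fin 2) : j = 0 ∨ j = 1 := by omega

lemma pderiv_one_X_zero : (pderiv (1 : Fin 2)) (X 0 : R2) = 0 := by
  rw [pderiv_X]; simp

lemma pderiv_one_X_one : (pderiv (1 : Fin 2)) (X 1 : R2) = 1 := by
  rw [pderiv_X]; simp

-- generic composition helper
lemma aeval_comp₂ {B A : Type*} [CommSemiring B] [Algebra ℂ B] [CommSemiring A] [Algebra ℂ A]
    (φ : B →ₐ[ℂ] A) (g0 g1 : B) (p : R2) :
    φ (aeval ![g0, g1] p) = aeval ![φ g0, φ g1] p := by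
  have h2 := AlgHom.congr_fun (MvPolynomial.comp_aeval (R := ℂ) ![g0, g1] φ) p
  simp only [AlgHom.comp_apply] at h2
  have hv : (fun i => φ (![g0, g1] i)) = ![φ g0, φ g1] := by
    funext i
    rcases fin2_cases i with h | h <;> subst h <;> simp
  rw [h2, hv]

lemma fin3_cases (j : Fin 3) : j = 0 ∨ j = 1 ∨ j = 2 := by omega

lemma aeval_comp₃ {B A : Type*} [CommSemiring B] [Algebra ℂ B] [CommSemiring A] [Algebra ℂ A]
    (φ : B →ₐ[ℂ] A) (g0 g1 g2 : B) (p : R3) :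
    φ (aeval ![g0, g1, g2] p) = aeval ![φ g0, φ g1, φ g2] p := by
  have h2 := AlgHom.congr_fun (MvPolynomial.comp_aeval (R := ℂ) ![g0, g1, g2] φ) p
  simp only [AlgHom.comp_apply] at h2
  have hv : (fun i => φ (![g0, g1, g2] i)) = ![φ g0, φ g1, φ g2] := by
    funext i
    rcases fin3_cases i with h | h | h <;> subst h <;> simp
  rw [h2, hv]

lemma aeval_id₂ (p : R2) : aeval ![(X 0 : R2), X 1] p = p := by
  have hv : (![(X 0 : R2), X 1]) = X := by
    funext i
    rcases fin2_cases i with h | h <;> subst h <;> simp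
  rw [hv, aeval_X_left_apply]

/-- first-order Taylor expansion in the second slot -/
lemma taylor₂ (p : R2) {A : Type*} [CommRing A] [Algebra ℂ A] (a u v : A) :
    ∃ c : A, aeval ![a, u + v] p
      = aeval ![a, u] p + v * aeval ![a, u] (pderiv 1 p) + v ^ 2 * c := by
  induction p using MvPolynomial.induction_on with
  | C r => exact ⟨0, by simp⟩
  | add p q hp hq =>
      obtain ⟨c, hc⟩ := hp; obtain ⟨d, hd⟩ := hq
      refine ⟨c + d, ?_⟩
      rw [map_add, hc, map_add, hd, map_add, map_add]
      ring
  | mul_X p j hp =>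
      obtain ⟨c, hc⟩ := hp
      rcases fin2_cases j with h | h <;> subst h
      · refine ⟨c * a, ?_⟩
        rw [map_mul, map_mul, hc, pderiv_mul, pderiv_one_X_zero]
        simp only [map_add, map_mul, aeval_X, Matrix.cons_val_zero, mul_zero, map_zero, add_zero]
        ring
      · refine ⟨c * (u + v) + aeval ![a, u] (pderiv 1 p), ?_⟩
        rw [map_mul, map_mul, hc, pderiv_mul, pderiv_one_X_one]
        simp only [map_add, map_mul, map_one, aeval_X, Matrix.cons_val_one, Matrix.head_cons,
          mul_one, Matrix.cons_val_zero]
        ring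

/-- divided difference in the second slot -/
lemma dd₂ (p : R2) {A : Type*} [CommRing A] [Algebra ℂ A] (a u v : A) :
    ∃ c : A, aeval ![a, u] p - aeval ![a, v] p = (u - v) * c := by
  obtain ⟨c, hc⟩ := taylor₂ p a v (u - v)
  refine ⟨aeval ![a, v] (pderiv 1 p) + (u - v) * c, ?_⟩
  have h : v + (u - v) = u := by ring
  rw [h] at hc
  rw [hc]; ring

abbrev pi0 : R2 →ₐ[ℂ] Polynomial ℂ := aeval ![0, Polynomial.X]

lemma pi0_X0 : pi0 (X 0) = 0 := by simp
lemma pi0_X1 : pi0 (X 1) = Polynomial.X := by simp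

lemma exists_X0_decomp (w : R2) :
    ∃ h : R2, w = Polynomial.aeval (X 1 : R2) (pi0 w) + X 0 * h := by
  induction w using MvPolynomial.induction_on with
  | C r => exact ⟨0, by simp⟩
  | add p q hp hq =>
      obtain ⟨h1, e1⟩ := hp; obtain ⟨h2, e2⟩ := hq
      refine ⟨h1 + h2, ?_⟩
      rw [map_add, map_add]
      calc p + q = (Polynomial.aeval (X 1 : R2) (pi0 p) + X 0 * h1)
            + (Polynomial.aeval (X 1 : R2) (pi0 q) + X 0 * h2) := by rw [← e1, ← e2]
        _ = _ := by ring
  | mul_X p j hp =>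
      obtain ⟨h, e⟩ := hp
      rcases fin2_cases j with hj | hj <;> subst hj
      · refine ⟨p, ?_⟩
        rw [map_mul, pi0_X0, mul_zero, map_zero, zero_add]
        ring
      · refine ⟨h * X 1, ?_⟩
        rw [map_mul, pi0_X1, map_mul, Polynomial.aeval_X]
        conv_lhs => rw [e]
        ring

lemma X0_dvd_of_pi0_eq_zero {w : R2} (h : pi0 w = 0) : (X 0 : R2) ∣ w := by
  obtain ⟨g, hg⟩ := exists_X0_decomp w
  rw [h] at hg
  simp only [map_zero, zero_add] at hg
  exact ⟨g, hg⟩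

lemma pi0_pderiv (w : R2) : pi0 (pderiv 1 w) = Polynomial.derivative (pi0 w) := by
  induction w using MvPolynomial.induction_on with
  | C r => simp
  | add p q hp hq => rw [map_add, map_add, map_add, hp, hq, Polynomial.derivative_add]
  | mul_X p j hp =>
      rcases fin2_cases j with hj | hj <;> subst hj
      · rw [pderiv_mul, pderiv_one_X_zero]
        simp [pi0_X0]
      · rw [pderiv_mul, pderiv_one_X_one]
        simp only [mul_one, map_add, map_mul, pi0_X1, hp, Polynomial.derivative_mul,
          Polynomial.derivative_X]


section Decomp

open Polynomial

lemma iter_deriv_facts (s : Polynomial ℂ) (hs : 1 ≤ s.natDegree) {i : ℕ} (hi : i ≤ s.natDegree) :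
    ((⇑Polynomial.derivative)^[i] s).natDegree = s.natDegree - i ∧
      (⇑Polynomial.derivative)^[i] s ≠ 0 := by
  induction i with
  | zero =>
      refine ⟨by simp, ?_⟩
      simp only [Function.iterate_zero, id_eq]
      intro h
      rw [h] at hs; simp at hs
  | succ i ih =>
      have hi' : i ≤ s.natDegree := by omega
      obtain ⟨hdeg, hne⟩ := ih hi'
      set p := (⇑Polynomial.derivative)^[i] s with hp
      have h1 : 1 ≤ p.natDegree := by omega
      have hc : (Polynomial.derivative p).coeff (p.natDegree - 1) ≠ 0 := by
        rw [Polynomial.coeff_derivative]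
        have he : p.natDegree - 1 + 1 = p.natDegree := by omega
        rw [he]
        apply mul_ne_zero
        · rw [Polynomial.coeff_natDegree]
          exact Polynomial.leadingCoeff_ne_zero.mpr hne
        · rw [← he]
          exact_mod_cast Nat.cast_add_one_ne_zero (R := ℂ) (p.natDegree - 1)
      have hne' : Polynomial.derivative p ≠ 0 := by
        intro h; rw [h] at hc; simp at hc
      have hge : p.natDegree - 1 ≤ (Polynomial.derivative p).natDegree :=
        Polynomial.le_natDegree_of_ne_zero hc
      have hle := Polynomial.natDegree_derivative_le p
      constructor
      · rw [Function.iterate_succ_apply', ← hp]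
        omega
      · rw [Function.iterate_succ_apply', ← hp]
        exact hne'

lemma decomp_main (s : Polynomial ℂ) (hs : 1 ≤ s.natDegree) :
    ∀ N : ℕ, ∀ u : Polynomial ℂ, u.natDegree ≤ N →
    ∃ a : ℕ → Polynomial ℂ,
      u = ∑ i ∈ Finset.Icc 1 s.natDegree,
        (⇑Polynomial.derivative)^[i] s * Polynomial.aeval s (a i) := by
  intro N
  induction N using Nat.strong_induction_on with
  | _ N ih =>
    intro u hu
    by_cases hu0 : u = 0
    · exact ⟨fun _ => 0, by simp [hu0]⟩
    have hsne : s ≠ 0 := by intro h; rw [h] at hs; simp at hs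
    set d := s.natDegree with hd
    set M := u.natDegree with hM
    have hrd : M % d < d := Nat.mod_lt _ (by omega)
    set idx : ℕ := d - M % d with hidx
    set mm : ℕ := M / d with hmm
    have hi1 : 1 ≤ idx := by omega
    have hid : idx ≤ d := by omega
    obtain ⟨hwdeg, hwne⟩ := iter_deriv_facts s hs hid
    set w : Polynomial ℂ := (⇑Polynomial.derivative)^[idx] s * s ^ mm with hw
    have hwne' : w ≠ 0 := mul_ne_zero hwne (pow_ne_zero _ hsne)
    have hmoddiv := Nat.mod_add_div M d
    have hwd : w.natDegree = M := by
      rw [hw, Polynomial.natDegree_mul hwne (pow_ne_zero _ hsne), Polynomial.natDegree_pow,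
        hwdeg]
      have h1 : s.natDegree - idx = M % d := by omega
      rw [h1, hmm, mul_comm, ← hd]
      exact hmoddiv
    set γ := u.leadingCoeff / w.leadingCoeff with hγ
    set u' := u - Polynomial.C γ * w with hu'
    have hwlc : w.leadingCoeff ≠ 0 := Polynomial.leadingCoeff_ne_zero.mpr hwne'
    have hcoeff : u'.coeff M = 0 := by
      rw [hu', Polynomial.coeff_sub, Polynomial.coeff_C_mul]
      rw [show u.coeff M = u.leadingCoeff from Polynomial.coeff_natDegree]
      rw [show w.coeff M = w.leadingCoeff by rw [← hwd]; exact Polynomial.coeff_natDegree]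
      rw [hγ, div_mul_cancel₀ _ hwlc, sub_self]
    have hu'le : u'.natDegree ≤ M := by
      refine le_trans (Polynomial.natDegree_sub_le _ _) (max_le le_rfl ?_)
      exact le_trans (Polynomial.natDegree_C_mul_le _ _) (le_of_eq hwd)
    -- the contribution of w
    have hterm : Polynomial.C γ * w
        = (⇑Polynomial.derivative)^[idx] s * Polynomial.aeval s (Polynomial.C γ * Polynomial.X ^ mm) := by
      rw [map_mul, Polynomial.aeval_C, map_pow, Polynomial.aeval_X, hw]
      simp only [Polynomial.algebraMap_eq]
      ring
    rcases eq_or_ne u' 0 with h0 | h0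
    · refine ⟨fun j => if j = idx then Polynomial.C γ * Polynomial.X ^ mm else 0, ?_⟩
      have hu_eq : u = Polynomial.C γ * w := by
        have := sub_eq_zero.mp (hu' ▸ h0)
        exact this
      rw [hu_eq, hterm]
      rw [Finset.sum_eq_single_of_mem idx (Finset.mem_Icc.mpr ⟨hi1, hid⟩)]
      · simp
      · intro j _ hj
        simp [hj]
    · have hu'lt : u'.natDegree < M := by
        rcases lt_or_eq_of_le hu'le with h | h
        · exact h
        · exfalso
          have : u'.coeff u'.natDegree ≠ 0 := by
            rw [Polynomial.coeff_natDegree]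
            exact Polynomial.leadingCoeff_ne_zero.mpr h0
          rw [h] at this
          exact this hcoeff
      obtain ⟨a', ha'⟩ := ih u'.natDegree (by omega) u' le_rfl
      refine ⟨fun j => a' j + (if j = idx then Polynomial.C γ * Polynomial.X ^ mm else 0), ?_⟩
      have hsplit : u = u' + Polynomial.C γ * w := by rw [hu']; ring
      rw [hsplit, ha', hterm]
      rw [show (∑ i ∈ Finset.Icc 1 d, (⇑Polynomial.derivative)^[i] s *
            Polynomial.aeval s (a' i + (if i = idx then Polynomial.C γ * Polynomial.X ^ mm else 0)))
          = (∑ i ∈ Finset.Icc 1 d, (⇑Polynomial.derivative)^[i] s * Polynomial.aeval s (a' i))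
            + (∑ i ∈ Finset.Icc 1 d, (⇑Polynomial.derivative)^[i] s *
                Polynomial.aeval s (if i = idx then Polynomial.C γ * Polynomial.X ^ mm else 0)) by
          rw [← Finset.sum_add_distrib]
          refine Finset.sum_congr rfl fun j _ => ?_
          rw [map_add]; ring]
      congr 1
      rw [Finset.sum_eq_single_of_mem idx (Finset.mem_Icc.mpr ⟨hi1, hid⟩)]
      · simp
      · intro j _ hj
        simp [hj]

lemma decomp (s : Polynomial ℂ) (hs : 1 ≤ s.natDegree) (u : Polynomial ℂ) :
    ∃ a : ℕ → Polynomial ℂ,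
      u = ∑ i ∈ Finset.Icc 1 s.natDegree,
        (⇑Polynomial.derivative)^[i] s * Polynomial.aeval s (a i) :=
  decomp_main s hs u.natDegree u le_rfl

end Decomp


section DegBounds

lemma degreeOf0_aevalX1 (f : Polynomial ℂ) :
    degreeOf 0 (Polynomial.aeval (X 1 : R2) f) = 0 := by
  refine Nat.le_zero.mp ?_
  induction f using Polynomial.induction_on' with
  | add p q hp hq =>
      rw [map_add]
      exact le_trans (degreeOf_add_le _ _ _) (by omega)
  | monomial n a =>
      rw [Polynomial.aeval_monomial]
      refine le_trans (degreeOf_mul_le _ _ _) ?_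
      have h1 : degreeOf 0 (algebraMap ℂ R2 a) = 0 := by
        rw [MvPolynomial.algebraMap_eq]; exact degreeOf_C _ _
      have h2 : degreeOf 0 ((X 1 : R2) ^ n) = 0 := by
        refine Nat.le_zero.mp (le_trans (degreeOf_pow_le _ _ _) ?_)
        rw [degreeOf_X]
        simp
      rw [h1, h2]

lemma degreeOf0_bound (k : ℕ) (f : Polynomial ℂ) :
    degreeOf 0 ((X 0 : R2) ^ k * Polynomial.aeval (X 1 : R2) f) ≤ k := by
  refine le_trans (degreeOf_mul_le _ _ _) ?_
  have h1 : degreeOf 0 ((X 0 : R2) ^ k) ≤ k := by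
    refine le_trans (degreeOf_pow_le _ _ _) ?_
    rw [degreeOf_X]
    simp
  have h2 := degreeOf0_aevalX1 f
  omega

end DegBounds

section LemA

/-- the reduced standard form determined by the layer data `q` -/
def Q2of (s : Polynomial ℂ) (q : ℕ → R2) : R2 :=
  Polynomial.aeval (X 1) s +
    X 0 * ∑ i ∈ Finset.Icc 2 s.natDegree,
      Polynomial.aeval (X 1) ((⇑Polynomial.derivative)^[i] s) *
        aeval ![X 0, Polynomial.aeval (X 1) s] (q i)

def psiof (Q2 B : R2) : R2 := X 1 - X 0 * aeval ![X 0, Q2] B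

lemma pi0_aevalX1 (f : Polynomial ℂ) :
    pi0 (Polynomial.aeval (X 1 : R2) f) = f := by
  rw [← Polynomial.aeval_algHom_apply pi0 (X 1) f]
  simp only [pi0_X1]
  exact Polynomial.aeval_X_left_apply f

lemma pi0_Q2of (s : Polynomial ℂ) (q : ℕ → R2) : pi0 (Q2of s q) = s := by
  rw [Q2of, map_add, map_mul, pi0_X0, zero_mul, add_zero, pi0_aevalX1]

lemma pi0_psiof (Q2 B : R2) : pi0 (psiof Q2 B) = Polynomial.X := by
  rw [psiof, map_sub, map_mul, pi0_X0, zero_mul, sub_zero, pi0_X1]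

set_option maxHeartbeats 1000000 in
lemma lemA (Q : R2) (hd : 1 ≤ (pi0 Q).natDegree) (k : ℕ) :
    ∃ (B : R2) (q : ℕ → R2),
      (∀ i, q i = 0 ∨ (q i).degreeOf 0 + 1 ≤ k) ∧
      (X 0 : R2) ^ (k + 1) ∣
        aeval ![X 0, psiof (Q2of (pi0 Q) q) B] Q - Q2of (pi0 Q) q := by
  induction k with
  | zero =>
      refine ⟨0, fun _ => 0, fun i => Or.inl rfl, ?_⟩
      have hQ2 : Q2of (pi0 Q) (fun _ => 0) = Polynomial.aeval (X 1) (pi0 Q) := by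
        rw [Q2of]
        simp
      have hψ : psiof (Q2of (pi0 Q) (fun _ => 0)) 0 = X 1 := by
        rw [psiof]; simp
      rw [hψ, hQ2, pow_one]
      obtain ⟨h, hh⟩ := exists_X0_decomp Q
      refine ⟨h, ?_⟩
      rw [aeval_id₂]
      linear_combination hh
  | succ k IH =>
      obtain ⟨B, q, hbnd, hdvd⟩ := IH
      obtain ⟨E, hE⟩ := hdvd
      set s := pi0 Q with hs
      set d := s.natDegree with hdd
      set P : R2 := Polynomial.aeval (X 1) s with hP
      obtain ⟨a, ha⟩ := decomp s hd (pi0 E)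
      set B' : R2 := B + X 0 ^ k * Polynomial.aeval (X 1) (a 1) with hB'
      set q' : ℕ → R2 := fun i => q i + X 0 ^ k * Polynomial.aeval (X 1) (a i) with hq'
      refine ⟨B', q', ?_, ?_⟩
      · intro i
        right
        have h1 : degreeOf 0 (q i) ≤ k := by
          rcases hbnd i with h | h
          · rw [h, degreeOf_zero]; omega
          · omega
        have h2 := degreeOf0_bound k (a i)
        have h3 := degreeOf_add_le 0 (q i) (X 0 ^ k * Polynomial.aeval (X 1) (a i))
        simp only [hq']
        omega
      · -- main divisibility
        set Q2 : R2 := Q2of s q with hQ2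
        set Q2' : R2 := Q2of s q' with hQ2'
        set ψ : R2 := psiof Q2 B with hψ
        set ψ' : R2 := psiof Q2' B' with hψ'
        set V : R2 := ∑ i ∈ Finset.Icc 2 d,
          Polynomial.aeval (X 1 : R2) ((⇑Polynomial.derivative)^[i] s) *
            aeval (R := ℂ) ![X 0, P] (Polynomial.aeval (X 1 : R2) (a i)) with hV
        have haevX0 : aeval (R := ℂ) ![(X 0 : R2), P] (X 0 : R2) = X 0 := by simp
        -- Q2' = Q2 + X0^(k+1) V
        have hsplitQ2 : Q2' = Q2 + X 0 ^ (k + 1) * V := by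
          rw [hQ2', hQ2, Q2of, Q2of]
          have hterm : ∀ i ∈ Finset.Icc 2 d,
              Polynomial.aeval (X 1 : R2) ((⇑Polynomial.derivative)^[i] s) *
                aeval ![X 0, P] (q' i)
              = Polynomial.aeval (X 1 : R2) ((⇑Polynomial.derivative)^[i] s) *
                  aeval ![X 0, P] (q i)
                + X 0 ^ k * (Polynomial.aeval (X 1 : R2) ((⇑Polynomial.derivative)^[i] s) *
                    aeval ![X 0, P] (Polynomial.aeval (X 1 : R2) (a i))) := by
            intro i _
            rw [hq']
            simp only [map_add, map_mul, map_pow, haevX0]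
            ring
          rw [Finset.sum_congr rfl hterm, Finset.sum_add_distrib, ← Finset.mul_sum, ← hV, ← hP]
          ring
        -- aeval![X0,Q2'] B' = aeval![X0,Q2'] B + X0^k * (Polynomial.aeval Q2' (a 1))
        have hBB : aeval ![(X 0 : R2), Q2'] B'
            = aeval ![(X 0 : R2), Q2'] B + X 0 ^ k * Polynomial.aeval Q2' (a 1) := by
          rw [hB']
          simp only [map_add, map_mul, map_pow, aeval_X, Matrix.cons_val_zero]
          congr 1
          congr 1
          exact (Polynomial.aeval_algHom_apply (aeval ![(X 0 : R2), Q2']) (X 1) (a 1)).symm.trans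
            (by simp)
        obtain ⟨c₁, hc₁⟩ := dd₂ B (X 0 : R2) Q2' Q2
        have hc₁' : aeval ![(X 0 : R2), Q2'] B - aeval ![(X 0 : R2), Q2] B
            = X 0 ^ (k + 1) * (V * c₁) := by
          rw [hc₁, hsplitQ2]; ring
        set W : R2 := Polynomial.aeval Q2' (a 1) + X 0 * (V * c₁) with hW
        have hψdiff : ψ' = ψ + -(X 0 ^ (k + 1) * W) := by
          rw [hψ', hψ, psiof, psiof, hW]
          have : aeval ![(X 0 : R2), Q2'] B' =
              aeval ![(X 0 : R2), Q2] B + X 0 ^ (k+1) * (V * c₁) + X 0 ^ k * Polynomial.aeval Q2' (a 1) := by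
            rw [hBB, ← hc₁']; ring
          rw [this]
          ring
        obtain ⟨c₂, hc₂⟩ := taylor₂ Q (X 0 : R2) ψ (-(X 0 ^ (k + 1) * W))
        rw [← hψdiff] at hc₂
        set D : R2 := aeval ![(X 0 : R2), ψ] (pderiv 1 Q) with hD
        -- from hE : aeval ![X0, ψ] Q - Q2 = X0^(k+1) * E
        have hQψ : aeval ![(X 0 : R2), ψ] Q = Q2 + X 0 ^ (k + 1) * E := by
          rw [← hE]; ring
        set M : R2 := E - Polynomial.aeval Q2' (a 1) * D - V with hM
        -- X0 ∣ M
        have hpi0M : pi0 M = 0 := by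
          have h1 : pi0 E = ∑ i ∈ Finset.Icc 1 d, (⇑Polynomial.derivative)^[i] s *
              Polynomial.aeval s (a i) := ha
          have h2 : pi0 (Polynomial.aeval Q2' (a 1)) = Polynomial.aeval s (a 1) := by
            rw [← Polynomial.aeval_algHom_apply pi0 Q2' (a 1), hQ2', pi0_Q2of]
          have h3 : pi0 D = Polynomial.derivative s := by
            rw [hD, aeval_comp₂ pi0 (X 0) ψ, pi0_X0, hψ, pi0_psiof]
            show pi0 (pderiv 1 Q) = _
            rw [pi0_pderiv]
          have h4 : pi0 V = ∑ i ∈ Finset.Icc 2 d, (⇑Polynomial.derivative)^[i] s *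
              Polynomial.aeval s (a i) := by
            rw [hV, map_sum]
            refine Finset.sum_congr rfl fun i _ => ?_
            rw [map_mul, pi0_aevalX1]
            congr 1
            rw [aeval_comp₂ pi0 (X 0) P, pi0_X0, hP, pi0_aevalX1]
            exact (Polynomial.aeval_algHom_apply (aeval ![(0 : Polynomial ℂ), s]) (X 1)
              (a i)).symm.trans (by simp)
          rw [hM, map_sub, map_sub, map_mul, h1, h2, h3, h4]
          have hins : Finset.Icc 1 d = insert 1 (Finset.Icc 2 d) := by
            ext j
            simp only [Finset.mem_Icc, Finset.mem_insert]
            omega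
          rw [hins, Finset.sum_insert (by simp)]
          simp only [Function.iterate_one]
          ring
        obtain ⟨M1, hM1⟩ := X0_dvd_of_pi0_eq_zero hpi0M
        -- assemble
        refine ⟨M1 + (-(V * c₁ * D) + X 0 ^ k * W ^ 2 * c₂), ?_⟩
        rw [hc₂, hQψ, hsplitQ2]
        rw [show E - Polynomial.aeval Q2' (a 1) * D - V = M from hM.symm] at *
        -- express everything; use hM1 : M = X 0 * M1
        have hMM : E = M + Polynomial.aeval Q2' (a 1) * D + V := by rw [hM]; ring
        rw [hMM, hM1, hW]
        ring

end LemA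


section LemBC

lemma lemC1 (Q Q2 B : R2) (n : ℕ)
    (h : (X 0 : R2) ^ n ∣ aeval ![X 0, psiof Q2 B] Q - Q2) :
    (X 0 : R2) ^ n ∣ aeval ![X 0, X 1 + X 0 * aeval (R := ℂ) ![X 0, Q] B] Q2 - Q := by
  set φ : R2 := X 1 + X 0 * aeval (R := ℂ) ![X 0, Q] B with hφ
  suffices H : ∀ k, k ≤ n → (X 0 : R2) ^ k ∣ aeval ![X 0, φ] Q2 - Q from H n le_rfl
  intro k
  induction k with
  | zero => intro _; simp only [pow_zero]; exact one_dvd _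
  | succ k ih =>
      intro hk
      obtain ⟨ε', hε'⟩ := ih (by omega)
      obtain ⟨F, hF⟩ := h
      set A : R2 →ₐ[ℂ] R2 := aeval (R := ℂ) ![X 0, φ] with hA
      have hA0 : A (X 0) = X 0 := by simp [hA]
      have hA1 : A (X 1) = φ := by simp [hA]
      set ψ : R2 := psiof Q2 B with hψ
      set ψφ : R2 := A ψ with hψφ
      set Q2φ : R2 := A Q2 with hQ2φ
      have hε : Q2φ - Q = X 0 ^ k * ε' := hε'
      have hcomp2 : aeval ![(X 0 : R2), ψφ] Q - Q2φ = X 0 ^ n * A F := by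
        have h4 := congrArg A hF
        rw [map_sub, map_mul, map_pow, hA0] at h4
        rw [aeval_comp₂ A (X 0) ψ Q, hA0] at h4
        exact h4
      have hψφeq : ψφ = φ - X 0 * aeval ![(X 0 : R2), Q2φ] B := by
        rw [hψφ, hψ, psiof, map_sub, map_mul, hA1, hA0, aeval_comp₂ A (X 0) Q2 B, hA0]
      obtain ⟨c, hc⟩ := dd₂ B (X 0 : R2) Q2φ Q
      have hψφX1 : ψφ - X 1 = -(X 0 ^ (k + 1) * (ε' * c)) := by
        rw [hψφeq, hφ]
        linear_combination (-(X 0 : R2)) * hc - ((X 0 : R2) * c) * hε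
      obtain ⟨c₂, hc₂⟩ := dd₂ Q (X 0 : R2) ψφ (X 1)
      rw [aeval_id₂] at hc₂
      refine ⟨-(X 0 ^ (n - (k + 1)) * A F) + -(ε' * c * c₂), ?_⟩
      have hn : (X 0 : R2) ^ n = X 0 ^ (k + 1) * X 0 ^ (n - (k + 1)) := by
        rw [← pow_add]; congr 1; omega
      have hkey : aeval ![(X 0 : R2), φ] Q2 - Q = -(X 0 ^ n * A F) + (ψφ - X 1) * c₂ := by
        linear_combination -hcomp2 + hc₂
      rw [hkey, hψφX1, hn]
      ring

lemma toXYZ_X0 : toXYZ (X 0) = (X 0 : R3) := by simp [toXYZ]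
lemma toXYZ_X1 : toXYZ (X 1) = (X 2 : R3) := by simp [toXYZ]

lemma lemB (Q Q2 B : R2) (n : ℕ)
    (h1 : (X 0 : R2) ^ n ∣ aeval ![X 0, X 1 + X 0 * aeval (R := ℂ) ![X 0, Q] B] Q2 - Q)
    (h2 : (X 0 : R2) ^ n ∣ aeval ![X 0, psiof Q2 B] Q - Q2) :
    DanEquiv Q n Q2 n := by
  classical
  set W : R3 := toXYZ Q - X 0 ^ n * X 1 with hW
  set W₂ : R3 := toXYZ Q2 - X 0 ^ n * X 1 with hW₂
  set ζ : R3 := X 2 + X 0 * aeval (R := ℂ) ![X 0, W] B with hζ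
  set ζ' : R3 := X 2 - X 0 * aeval (R := ℂ) ![X 0, W₂] B with hζ'
  have hD1 : ∃ C : R3, aeval ![(X 0 : R3), ζ] Q2 - toXYZ Q = X 0 ^ n * C := by
    obtain ⟨F, hF⟩ := h1
    have h3 := congrArg toXYZ hF
    rw [map_sub, map_mul, map_pow, toXYZ_X0] at h3
    rw [aeval_comp₂ toXYZ (X 0) (X 1 + X 0 * aeval (R := ℂ) ![X 0, Q] B) Q2, toXYZ_X0] at h3
    rw [map_add, map_mul, toXYZ_X0, toXYZ_X1] at h3
    rw [aeval_comp₂ toXYZ (X 0) Q B, toXYZ_X0] at h3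
    set φ3 : R3 := X 2 + X 0 * aeval (R := ℂ) ![X 0, toXYZ Q] B with hφ3
    obtain ⟨c, hc⟩ := dd₂ Q2 (X 0 : R3) ζ φ3
    obtain ⟨c', hc'⟩ := dd₂ B (X 0 : R3) W (toXYZ Q)
    have hWQ : W - toXYZ Q = -(X 0 ^ n * X 1) := by rw [hW]; ring
    rw [hWQ] at hc'
    refine ⟨toXYZ F + (-(X 1 * c' * c)) * X 0, ?_⟩
    have hζφ : ζ - φ3 = X 0 * (-(X 0 ^ n * X 1) * c') := by
      rw [hζ, hφ3]
      linear_combination (X 0 : R3) * hc'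
    linear_combination hc + c * hζφ + h3
  have hD2 : ∃ C' : R3, aeval ![(X 0 : R3), ζ'] Q - toXYZ Q2 = X 0 ^ n * C' := by
    obtain ⟨F, hF⟩ := h2
    have h3 := congrArg toXYZ hF
    rw [map_sub, map_mul, map_pow, toXYZ_X0] at h3
    rw [aeval_comp₂ toXYZ (X 0) (psiof Q2 B) Q, toXYZ_X0] at h3
    rw [psiof, map_sub, map_mul, toXYZ_X0, toXYZ_X1] at h3
    rw [aeval_comp₂ toXYZ (X 0) Q2 B, toXYZ_X0] at h3
    set ψ3 : R3 := X 2 - X 0 * aeval (R := ℂ) ![X 0, toXYZ Q2] B with hψ3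
    obtain ⟨c, hc⟩ := dd₂ Q (X 0 : R3) ζ' ψ3
    obtain ⟨c', hc'⟩ := dd₂ B (X 0 : R3) W₂ (toXYZ Q2)
    have hWQ : W₂ - toXYZ Q2 = -(X 0 ^ n * X 1) := by rw [hW₂]; ring
    rw [hWQ] at hc'
    refine ⟨toXYZ F + (X 1 * c' * c) * X 0, ?_⟩
    have hζψ : ζ' - ψ3 = -(X 0 * (-(X 0 ^ n * X 1) * c')) := by
      rw [hζ', hψ3]
      linear_combination (-(X 0 : R3)) * hc'
    linear_combination hc + c * hζψ + h3
  obtain ⟨C, hC⟩ := hD1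
  obtain ⟨C', hC'⟩ := hD2
  set η : R3 := X 1 + C with hη
  set η' : R3 := X 1 + C' with hη'
  set Θ : R3 →ₐ[ℂ] R3 := aeval (R := ℂ) ![X 0, η, ζ] with hΘ
  set Θ' : R3 →ₐ[ℂ] R3 := aeval (R := ℂ) ![X 0, η', ζ'] with hΘ'
  have hΘX0 : Θ (X 0) = X 0 := by simp [hΘ]
  have hΘX1 : Θ (X 1) = η := by simp [hΘ]
  have hΘX2 : Θ (X 2) = ζ := by simp [hΘ]
  have hΘ'X0 : Θ' (X 0) = X 0 := by simp [hΘ']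
  have hΘ'X1 : Θ' (X 1) = η' := by simp [hΘ']
  have hΘ'X2 : Θ' (X 2) = ζ' := by simp [hΘ']
  have hΘtoXYZ : ∀ R : R2, Θ (toXYZ R) = aeval ![(X 0 : R3), ζ] R := by
    intro R
    rw [show toXYZ R = aeval ![(X 0 : R3), X 2] R from rfl, aeval_comp₂ Θ (X 0) (X 2) R,
      hΘX0, hΘX2]
  have hΘ'toXYZ : ∀ R : R2, Θ' (toXYZ R) = aeval ![(X 0 : R3), ζ'] R := by
    intro R
    rw [show toXYZ R = aeval ![(X 0 : R3), X 2] R from rfl, aeval_comp₂ Θ' (X 0) (X 2) R,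
      hΘ'X0, hΘ'X2]
  have hF2 : Θ' (danPoly Q n) = danPoly Q2 n := by
    simp only [danPoly]
    rw [map_sub, map_mul, map_pow, hΘ'X0, hΘ'X1, hΘ'toXYZ, hη']
    linear_combination -hC'
  have hF3 : Θ W₂ = W := by
    rw [hW₂, hW, map_sub, map_mul, map_pow, hΘX0, hΘX1, hΘtoXYZ, hη]
    linear_combination hC
  have hF4 : Θ' W = W₂ := by
    rw [hW, hW₂, map_sub, map_mul, map_pow, hΘ'X0, hΘ'X1, hΘ'toXYZ, hη']
    linear_combination hC'
  have hF5 : Θ ζ' = X 2 := by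
    rw [hζ', map_sub, map_mul, hΘX0, hΘX2]
    rw [aeval_comp₂ Θ (X 0) W₂ B, hΘX0, hF3, hζ]
    ring
  have hF6 : Θ' ζ = X 2 := by
    rw [hζ, map_add, map_mul, hΘ'X0, hΘ'X2]
    rw [aeval_comp₂ Θ' (X 0) W B, hΘ'X0, hF4, hζ']
    ring
  have hX0n : (X 0 : R3) ^ n ≠ 0 := pow_ne_zero _ (MvPolynomial.X_ne_zero 0)
  have hF7 : Θ C' = -C := by
    have key : X 0 ^ n * Θ C' = X 0 ^ n * (-C) := by
      have h3 := congrArg Θ hC'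
      rw [map_sub, map_mul, map_pow, hΘX0, hΘtoXYZ] at h3
      rw [aeval_comp₂ Θ (X 0) ζ' Q, hΘX0, hF5] at h3
      rw [show aeval ![(X 0 : R3), X 2] Q = toXYZ Q from rfl] at h3
      linear_combination -h3 - hC
    exact mul_left_cancel₀ hX0n key
  have hF8 : Θ' C = -C' := by
    have key : X 0 ^ n * Θ' C = X 0 ^ n * (-C') := by
      have h3 := congrArg Θ' hC
      rw [map_sub, map_mul, map_pow, hΘ'X0, hΘ'toXYZ] at h3
      rw [aeval_comp₂ Θ' (X 0) ζ Q2, hΘ'X0, hF6] at h3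
      rw [show aeval ![(X 0 : R3), X 2] Q2 = toXYZ Q2 from rfl] at h3
      linear_combination -h3 - hC'
    exact mul_left_cancel₀ hX0n key
  have hcomp1 : Θ'.comp Θ = AlgHom.id ℂ R3 := by
    apply MvPolynomial.algHom_ext
    intro i
    rcases fin3_cases i with hi | hi | hi <;> subst hi <;>
      simp only [AlgHom.comp_apply, AlgHom.id_apply]
    · rw [hΘX0, hΘ'X0]
    · rw [hΘX1, hη, map_add, hΘ'X1, hη', hF8]; ring
    · rw [hΘX2, hF6]
  have hcomp2 : Θ.comp Θ' = AlgHom.id ℂ R3 := by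
    apply MvPolynomial.algHom_ext
    intro i
    rcases fin3_cases i with hi | hi | hi <;> subst hi <;>
      simp only [AlgHom.comp_apply, AlgHom.id_apply]
    · rw [hΘ'X0, hΘX0]
    · rw [hΘ'X1, hη', map_add, hΘX1, hη, hF7]; ring
    · rw [hΘ'X2, hF5]
  refine ⟨AlgEquiv.ofAlgHom Θ' Θ hcomp1 hcomp2, ?_⟩
  rw [Ideal.map_span, Set.image_singleton]
  rw [show (AlgEquiv.ofAlgHom Θ' Θ hcomp1 hcomp2).toAlgHom.toRingHom (danPoly Q n)
      = danPoly Q2 n from hF2]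

end LemBC

end Work

/-- every Danielewski hypersurface is equivalent to one of the form
`x^n y = p(z) + x Σ_{i=2}^{deg p} p^{(i)}(z) q_i(x, p(z))` with `deg_x q_i < n - 1`. -/
theorem stmt_8 (n : ℕ) (hn : 1 ≤ n) (Q : R2) (hQ : 2 ≤ (Q0 Q).natDegree) :
    ∃ (p : Polynomial ℂ) (q : ℕ → R2), 2 ≤ p.natDegree ∧
      (∀ i, 2 ≤ i → i ≤ p.natDegree → (q i = 0 ∨ (q i).degreeOf 0 < n - 1)) ∧
      DanEquiv Q n
        (Polynomial.aeval (X 1) p +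
          X 0 * ∑ i ∈ Finset.Icc 2 p.natDegree,
            Polynomial.aeval (X 1) ((⇑Polynomial.derivative)^[i] p) *
              aeval ![X 0, Polynomial.aeval (X 1) p] (q i)) n := by
  have hd : 1 ≤ (pi0 Q).natDegree := by
    have h2 : (2 : ℕ) ≤ (pi0 Q).natDegree := hQ
    omega
  obtain ⟨B, q, hbnd, hdvd⟩ := lemA Q hd (n - 1)
  have hn1 : n - 1 + 1 = n := by omega
  rw [hn1] at hdvd
  refine ⟨Q0 Q, q, hQ, ?_, ?_⟩
  · intro i _ _
    rcases hbnd i with h | h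
    · exact Or.inl h
    · right; omega
  · have h1 := lemC1 Q (Q2of (pi0 Q) q) B n hdvd
    exact lemB Q (Q2of (pi0 Q) q) B n h1 hdvd
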